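/- Let y₋, y₊ > 0 and d ∈ (−1, 1) be real numbers, and define the real polynomial F(X) = ((1+d)/2)·(X + y₋)³·((X − (3/2)y₊)² + (3/4)y₊² + 1) + ((1−d)/2)·(X − y₊)³·((X + (3/2)y₋)² + (3/4)y₋² + 1). Then F has exactly one real root. -/

import Mathlib

set_option maxHeartbeats 1000000


/-- The quintic polynomial `F` built from parameters `y₋, y₊ > 0` and `d ∈ (-1,1)`
has exactly one real root. -/
theorem stmt_0 (ym yp d : ℝ) (hym : 0 < ym) (hyp : 0 < yp)
    (hd₁ : -1 < d) (hd₂ : d < 1) :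
    ∃! z : ℝ,
      ((1 + d) / 2) * (z + ym) ^ 3 * ((z - (3 / 2) * yp) ^ 2 + (3 / 4) * yp ^ 2 + 1) +
        ((1 - d) / 2) * (z - yp) ^ 3 * ((z + (3 / 2) * ym) ^ 2 + (3 / 4) * ym ^ 2 + 1) = 0 := by
  set c1 : ℝ := (1 + d) / 2 with hc1def
  set c2 : ℝ := (1 - d) / 2 with hc2def
  have hc1 : 0 < c1 := by rw [hc1def]; linarith
  have hc2 : 0 < c2 := by rw [hc2def]; linarith
  set A : ℝ → ℝ := fun z => (z - (3 / 2) * yp) ^ 2 + (3 / 4) * yp ^ 2 + 1 with hAdef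
  set B : ℝ → ℝ := fun z => (z + (3 / 2) * ym) ^ 2 + (3 / 4) * ym ^ 2 + 1 with hBdef
  have hA : ∀ z : ℝ, 0 < A z := fun z => by rw [hAdef]; positivity
  have hB : ∀ z : ℝ, 0 < B z := fun z => by rw [hBdef]; positivity
  set F : ℝ → ℝ := fun z => c1 * (z + ym) ^ 3 * A z + c2 * (z - yp) ^ 3 * B z with hFdef
  suffices hsuf : ∃! z : ℝ, F z = 0 by
    obtain ⟨z, hz, hu⟩ := hsuf
    refine ⟨z, ?_, fun y hy => hu y ?_⟩
    · simpa only [hFdef, hAdef, hBdef] using hz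
    · simpa only [hFdef, hAdef, hBdef] using hy
  -- every root of F lies in the open interval (-ym, yp)
  have hroot_mem : ∀ z : ℝ, F z = 0 → z ∈ Set.Ioo (-ym) yp := by
    intro z hz
    constructor
    · by_contra h
      push_neg at h
      have hz1 : z + ym ≤ 0 := by linarith
      have hz2 : z - yp < 0 := by linarith
      have hcube1 : (z + ym) ^ 3 ≤ 0 := by nlinarith [sq_nonneg (z + ym)]
      have hcube2 : (z - yp) ^ 3 < 0 := Odd.pow_neg ⟨1, by norm_num⟩ hz2
      have t1 : c1 * (z + ym) ^ 3 * A z ≤ 0 := by nlinarith [mul_pos hc1 (hA z)]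
      have t2 : c2 * (z - yp) ^ 3 * B z < 0 := by nlinarith [mul_pos hc2 (hB z)]
      have : F z < 0 := by rw [hFdef]; dsimp only; linarith
      linarith [this, hz.ge, hz.le]
    · by_contra h
      push_neg at h
      have hz1 : 0 < z + ym := by linarith
      have hz2 : 0 ≤ z - yp := by linarith
      have hcube1 : 0 < (z + ym) ^ 3 := pow_pos hz1 3
      have hcube2 : 0 ≤ (z - yp) ^ 3 := pow_nonneg hz2 3
      have t1 : 0 < c1 * (z + ym) ^ 3 * A z := by positivity
      have t2 : 0 ≤ c2 * (z - yp) ^ 3 * B z := by positivity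
      have : 0 < F z := by rw [hFdef]; dsimp only; linarith
      linarith [this, hz.ge]
  -- the ratio G is strictly monotone on (-ym, yp)
  set G : ℝ → ℝ := fun z => ((z + ym) ^ 3 * A z) / ((yp - z) ^ 3 * B z) with hGdef
  have hden_pos : ∀ z ∈ Set.Ioo (-ym) yp, 0 < (yp - z) ^ 3 * B z := by
    intro z hz
    have : 0 < yp - z := by linarith [hz.2]
    positivity
  have hmono : StrictMonoOn G (Set.Ioo (-ym) yp) := by
    apply strictMonoOn_of_deriv_pos (convex_Ioo _ _)
    · apply ContinuousOn.div
      · fun_prop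
      · fun_prop
      · intro z hz; exact (hden_pos z hz).ne'
    · rw [interior_Ioo]
      intro z hz
      have hzym : 0 < z + ym := by linarith [hz.1]
      have hzyp : 0 < yp - z := by linarith [hz.2]
      have hAz : HasDerivAt A (2 * (z - (3 / 2) * yp)) z := by
        rw [hAdef]
        have h1 : HasDerivAt (fun z : ℝ => (z - (3 / 2) * yp) ^ 2) (2 * (z - (3 / 2) * yp)) z := by
          have := ((hasDerivAt_id z).sub_const ((3 / 2) * yp)).fun_pow 2
          simpa using this
        simpa using (h1.add_const ((3 / 4) * yp ^ 2)).add_const 1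
      have hBz : HasDerivAt B (2 * (z + (3 / 2) * ym)) z := by
        rw [hBdef]
        have h1 : HasDerivAt (fun z : ℝ => (z + (3 / 2) * ym) ^ 2) (2 * (z + (3 / 2) * ym)) z := by
          have := ((hasDerivAt_id z).add_const ((3 / 2) * ym)).fun_pow 2
          simpa using this
        simpa using (h1.add_const ((3 / 4) * ym ^ 2)).add_const 1
      have hNum : HasDerivAt (fun z => (z + ym) ^ 3 * A z)
          (3 * (z + ym) ^ 2 * A z + (z + ym) ^ 3 * (2 * (z - (3 / 2) * yp))) z := by
        have h1 : HasDerivAt (fun z : ℝ => (z + ym) ^ 3) (3 * (z + ym) ^ 2) z := by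
          have := ((hasDerivAt_id z).add_const ym).fun_pow 3
          simpa using this
        exact h1.mul hAz
      have hDen : HasDerivAt (fun z => (yp - z) ^ 3 * B z)
          (-(3 * (yp - z) ^ 2) * B z + (yp - z) ^ 3 * (2 * (z + (3 / 2) * ym))) z := by
        have h1 : HasDerivAt (fun z : ℝ => (yp - z) ^ 3) (-(3 * (yp - z) ^ 2)) z := by
          have := ((hasDerivAt_id z).const_sub yp).fun_pow 3
          simpa using this
          
        exact h1.mul hBz
      have hdne : (yp - z) ^ 3 * B z ≠ 0 := (hden_pos z hz).ne'
      have hG : HasDerivAt G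
          (((3 * (z + ym) ^ 2 * A z + (z + ym) ^ 3 * (2 * (z - (3 / 2) * yp))) *
              ((yp - z) ^ 3 * B z) -
            ((z + ym) ^ 3 * A z) *
              (-(3 * (yp - z) ^ 2) * B z + (yp - z) ^ 3 * (2 * (z + (3 / 2) * ym)))) /
            ((yp - z) ^ 3 * B z) ^ 2) z := hNum.div hDen hdne
      rw [hG.deriv]
      apply div_pos
      · have key : (3 * (z + ym) ^ 2 * A z + (z + ym) ^ 3 * (2 * (z - (3 / 2) * yp))) *
              ((yp - z) ^ 3 * B z) -
            ((z + ym) ^ 3 * A z) *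
              (-(3 * (yp - z) ^ 2) * B z + (yp - z) ^ 3 * (2 * (z + (3 / 2) * ym))) =
            (z + ym) ^ 2 * (yp - z) ^ 2 *
              ((z + ym) * B z * ((z - 2 * yp) ^ 2 + 2 * yp ^ 2 + 3) +
               (yp - z) * A z * ((z + 2 * ym) ^ 2 + 2 * ym ^ 2 + 3)) := by
          rw [hAdef, hBdef]; ring
        rw [key]
        have hApos := hA z
        have hBpos := hB z
        positivity
      · positivity
  -- F z = 0 on the interval iff G z = c2 / c1
  have hG_of_root : ∀ z ∈ Set.Ioo (-ym) yp, F z = 0 → G z = c2 / c1 := by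
    intro z hz hFz
    have hd := (hden_pos z hz).ne'
    rw [hGdef]
    dsimp only
    rw [div_eq_div_iff hd hc1.ne']
    have : c1 * (z + ym) ^ 3 * A z + c2 * (z - yp) ^ 3 * B z = 0 := hFz
    nlinarith [this]
  -- existence via IVT
  have hFcont : ContinuousOn F (Set.Icc (-ym) yp) := by
    rw [hFdef, hAdef, hBdef]; fun_prop
  have hFa : F (-ym) < 0 := by
    have h1 : F (-ym) = -(c2 * (ym + yp) ^ 3 * B (-ym)) := by
      rw [hFdef, hBdef]; dsimp only; ring
    rw [h1]
    have : 0 < c2 * (ym + yp) ^ 3 * B (-ym) := by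
      have := hB (-ym)
      have h2 : 0 < ym + yp := by linarith
      positivity
    linarith
  have hFb : 0 < F yp := by
    have h1 : F yp = c1 * (yp + ym) ^ 3 * A yp := by
      rw [hFdef]; dsimp only; ring
    rw [h1]
    have := hA yp
    have h2 : 0 < yp + ym := by linarith
    positivity
  have hex : ∃ z ∈ Set.Ioo (-ym) yp, F z = 0 := by
    have hab : (-ym : ℝ) ≤ yp := by linarith
    have := intermediate_value_Ioo hab hFcont
    have h0 : (0 : ℝ) ∈ Set.Ioo (F (-ym)) (F yp) := ⟨hFa, hFb⟩
    obtain ⟨z, hz, hFz⟩ := this h0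
    exact ⟨z, hz, hFz⟩
  obtain ⟨z0, hz0mem, hz0⟩ := hex
  refine ⟨z0, hz0, ?_⟩
  intro z hzF
  · 
    have hzmem := hroot_mem z hzF
    have h1 : G z = c2 / c1 := hG_of_root z hzmem hzF
    have h2 : G z0 = c2 / c1 := hG_of_root z0 hz0mem hz0
    exact hmono.injOn hzmem hz0mem (by rw [h1, h2])
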